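/- Let p ≥ 1 be an odd integer, κ < 0, α := −κ > 0, and λ > 0, and set c := (α/λ)^{1/p} > 0. Let y₀ > c, and define the escape time T_esc := (1/(p·α))·ln( (λ/α) / (λ/α − y₀^{−p}) ), which is well-defined and positive since 0 < y₀^{−p} < λ/α. Then there is no differentiable function y : [0, T_esc] → ℝ satisfying ẏ(t) = κ·y(t) + λ·y(t)^{p+1} for all t ∈ [0, T_esc] with y(0) = y₀; i.e., the solution escapes to +∞ in finite time, before T_esc. -/

import Mathlib

open Set Filter

/-- Finite-time escape to +∞ for an odd-p mode with y₀ > c > 0. -/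
theorem stmt_15 (p : ℕ) (hp : 1 ≤ p) (hpo : Odd p)
    (κ : ℝ) (hκ : κ < 0) (α : ℝ) (hα : α = -κ)
    (lam : ℝ) (hlam : 0 < lam)
    (c : ℝ) (hc : c = (α / lam) ^ ((1 : ℝ) / (p : ℝ)))
    (y₀ : ℝ) (hy₀ : c < y₀)
    (T : ℝ)
    (hT : T = (1 / ((p : ℝ) * α)) *
      Real.log ((lam / α) / (lam / α - y₀ ^ (-(p : ℤ))))) :
    0 < y₀ ^ (-(p : ℤ)) ∧ y₀ ^ (-(p : ℤ)) < lam / α ∧ 0 < T ∧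
      ¬ ∃ y : ℝ → ℝ, y 0 = y₀ ∧
        ∀ t ∈ Set.Icc (0 : ℝ) T,
          HasDerivWithinAt y (κ * y t + lam * y t ^ (p + 1)) (Set.Icc (0 : ℝ) T) t := by
  have hα0 : 0 < α := by rw [hα]; linarith
  have hpR : (0 : ℝ) < (p : ℝ) := by exact_mod_cast hp
  have hp0 : p ≠ 0 := by omega
  have hal : 0 < α / lam := div_pos hα0 hlam
  have hc0 : 0 < c := by rw [hc]; exact Real.rpow_pos_of_pos hal _
  have hcp : c ^ p = α / lam := by
    rw [hc, ← Real.rpow_natCast ((α / lam) ^ ((1:ℝ)/(p:ℝ))) p, ← Real.rpow_mul hal.le,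
      one_div, inv_mul_cancel₀ hpR.ne', Real.rpow_one]
  have hy0pos : 0 < y₀ := hc0.trans hy₀
  have hyp : α / lam < y₀ ^ p := by
    rw [← hcp]; exact pow_lt_pow_left₀ hy₀ hc0.le hp0
  have hu₀ : y₀ ^ (-(p : ℤ)) = (y₀ ^ p)⁻¹ := by rw [zpow_neg, zpow_natCast]
  have hypos : 0 < y₀ ^ p := pow_pos hy0pos p
  have hu₀pos : 0 < y₀ ^ (-(p : ℤ)) := by rw [hu₀]; positivity
  have hlda : lam / α = (α / lam)⁻¹ := by rw [inv_div]
  have hu₀lt : y₀ ^ (-(p : ℤ)) < lam / α := by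
    rw [hu₀, hlda]; exact inv_strictAnti₀ hal hyp
  set u₀ := y₀ ^ (-(p : ℤ)) with hu₀def
  have hsub : 0 < lam / α - u₀ := sub_pos.mpr hu₀lt
  have hlda0 : 0 < lam / α := div_pos hlam hα0
  have hR1 : 1 < (lam / α) / (lam / α - u₀) :=
    (one_lt_div hsub).mpr (sub_lt_self _ hu₀pos)
  have hT0 : 0 < T := by
    rw [hT]
    exact mul_pos (by positivity) (Real.log_pos hR1)
  refine ⟨hu₀pos, hu₀lt, hT0, ?_⟩
  rintro ⟨y, hy0, hderiv⟩
  have hcy : ContinuousOn y (Icc 0 T) := fun t ht => (hderiv t ht).continuousWithinAt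
  -- key lemma: on any [0,s] where y is nonvanishing, the transformed quantity is constant
  have key : ∀ s, s ∈ Icc (0:ℝ) T → (∀ t ∈ Icc (0:ℝ) s, y t ≠ 0) →
      (y s ^ (-(p : ℤ)) - lam / α) * Real.exp ((-((p:ℝ) * α)) * s) = u₀ - lam / α := by
    intro s hs hne
    set g : ℝ → ℝ := fun t => (y t ^ (-(p : ℤ)) - lam / α) * Real.exp ((-((p:ℝ) * α)) * t)
      with hg
    have hIcc : Icc (0:ℝ) s ⊆ Icc (0:ℝ) T := Icc_subset_Icc le_rfl hs.2
    have hgderiv : ∀ t ∈ Icc (0:ℝ) s, HasDerivWithinAt g 0 (Icc (0:ℝ) s) t := by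
      intro t ht
      have hyt : y t ≠ 0 := hne t ht
      have hy' : HasDerivWithinAt y (κ * y t + lam * y t ^ (p + 1)) (Icc (0:ℝ) s) t :=
        (hderiv t (hIcc ht)).mono hIcc
      have hu' : HasDerivWithinAt (fun t => y t ^ (-(p : ℤ)))
          ((((-(p:ℤ)) : ℝ) * y t ^ ((-(p:ℤ)) - 1)) * (κ * y t + lam * y t ^ (p + 1)))
          (Icc (0:ℝ) s) t := by
        have := (hasDerivAt_zpow (-(p:ℤ)) (y t) (Or.inl hyt)).comp_hasDerivWithinAt t hy'
        simpa [Function.comp_def] using this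
      have hu'' : HasDerivWithinAt (fun t => y t ^ (-(p : ℤ)))
          ((p:ℝ) * α * y t ^ (-(p:ℤ)) - (p:ℝ) * lam) (Icc (0:ℝ) s) t := by
        convert hu' using 1
        have h1 : y t ^ ((-(p:ℤ)) - 1) = (y t ^ (p + 1))⁻¹ := by
          rw [← zpow_natCast (y t) (p+1), ← zpow_neg]
          congr 1
          push_cast
          ring
        have h2 : y t ^ (-(p:ℤ)) = (y t ^ p)⁻¹ := by rw [zpow_neg, zpow_natCast]
        rw [h1, h2, hα, pow_succ]
        have hyp0 : y t ^ p ≠ 0 := pow_ne_zero _ hyt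
        field_simp
        push_cast
        ring
      have hexp : HasDerivWithinAt (fun t => Real.exp ((-((p:ℝ) * α)) * t))
          (Real.exp ((-((p:ℝ) * α)) * t) * ((-((p:ℝ) * α)) * 1)) (Icc (0:ℝ) s) t :=
        (((hasDerivAt_id t).const_mul (-((p:ℝ) * α))).exp).hasDerivWithinAt
      have := (hu''.sub_const (lam / α)).mul hexp
      refine this.congr_deriv ?_
      field_simp
      ring
    have hgcont : ContinuousOn g (Icc 0 s) := fun t ht => (hgderiv t ht).continuousWithinAt
    have hconst := constant_of_has_deriv_right_zero hgcont (fun x hx => by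
      refine (hgderiv x (Ico_subset_Icc_self hx)).mono_of_mem_nhdsWithin ?_
      exact mem_of_superset (Icc_mem_nhdsGE_of_mem ⟨le_rfl, hx.2⟩)
        (Icc_subset_Icc hx.1 le_rfl))
    have h2 := hconst s (right_mem_Icc.mpr hs.1)
    simp only [hg] at h2
    rw [h2, hy0, mul_zero, Real.exp_zero, mul_one]
  -- y never vanishes on [0, T]
  have hnz : ∀ t ∈ Icc (0:ℝ) T, y t ≠ 0 := by
    by_contra h
    push_neg at h
    obtain ⟨t₀, ht₀, hyt₀⟩ := h
    set Z : Set ℝ := Icc (0:ℝ) T ∩ y ⁻¹' {0} with hZ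
    have hZclosed : IsClosed Z :=
      hcy.preimage_isClosed_of_isClosed isClosed_Icc isClosed_singleton
    have hZne : Z.Nonempty := ⟨t₀, ht₀, hyt₀⟩
    have hZbdd : BddBelow Z := ⟨0, fun z hz => hz.1.1⟩
    set t₁ := sInf Z with ht₁def
    have ht₁Z : t₁ ∈ Z := hZclosed.csInf_mem hZne hZbdd
    have ht₁T : t₁ ∈ Icc (0:ℝ) T := ht₁Z.1
    have hyt₁ : y t₁ = 0 := ht₁Z.2
    have ht₁pos : 0 < t₁ := by
      rcases ht₁T.1.lt_or_eq with h | h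
      · exact h
      · exfalso; rw [← h, hy0] at hyt₁; exact hy0pos.ne' hyt₁
    have hne_before : ∀ t ∈ Ico (0:ℝ) t₁, y t ≠ 0 := by
      intro t ht hyt
      exact absurd (csInf_le hZbdd ⟨⟨ht.1, ht.2.le.trans ht₁T.2⟩, hyt⟩) (not_le.mpr ht.2)
    have hpos_before : ∀ t ∈ Ico (0:ℝ) t₁, 0 < y t := by
      intro t ht
      rcases (hne_before t ht).lt_or_gt with hneg | hposi
      · exfalso
        have hsub2 : Icc (0:ℝ) t ⊆ Icc (0:ℝ) T :=
          Icc_subset_Icc le_rfl (ht.2.le.trans ht₁T.2)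
        have hiv := intermediate_value_Icc' ht.1 (hcy.mono hsub2)
        have h0mem : (0:ℝ) ∈ Icc (y t) (y 0) := ⟨hneg.le, by rw [hy0]; exact hy0pos.le⟩
        obtain ⟨t', ht', hyt'⟩ := hiv h0mem
        exact hne_before t' ⟨ht'.1, ht'.2.trans_lt ht.2⟩ hyt'
      · exact hposi
    -- find s < t₁ with y s < c
    have hclos : t₁ ∈ closure (Ico (0:ℝ) t₁) := by
      rw [closure_Ico ht₁pos.ne]; exact ⟨ht₁pos.le, le_rfl⟩
    have hnb : (nhdsWithin t₁ (Ico (0:ℝ) t₁)).NeBot :=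
      mem_closure_iff_nhdsWithin_neBot.mp hclos
    have htend : Tendsto y (nhdsWithin t₁ (Ico (0:ℝ) t₁)) (nhds 0) := by
      have hsub3 : Ico (0:ℝ) t₁ ⊆ Icc (0:ℝ) T :=
        Ico_subset_Icc_self.trans (Icc_subset_Icc le_rfl ht₁T.2)
      exact hyt₁ ▸ ((hcy t₁ ht₁T).mono hsub3).tendsto
    have hev : ∀ᶠ t in nhdsWithin t₁ (Ico (0:ℝ) t₁), y t < c :=
      htend.eventually_lt_const hc0
    obtain ⟨s, hysc, hsIco⟩ := (hev.and self_mem_nhdsWithin).exists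
    -- apply key on [0, s]
    have hsT : s ∈ Icc (0:ℝ) T := ⟨hsIco.1, hsIco.2.le.trans ht₁T.2⟩
    have hne_s : ∀ t ∈ Icc (0:ℝ) s, y t ≠ 0 :=
      fun t ht => hne_before t ⟨ht.1, ht.2.trans_lt hsIco.2⟩
    have hkey := key s hsT hne_s
    have hys_pos : 0 < y s := hpos_before s hsIco
    have hus : y s ^ (-(p:ℤ)) = (y s ^ p)⁻¹ := by rw [zpow_neg, zpow_natCast]
    have hbig : lam / α < y s ^ (-(p:ℤ)) := by
      rw [hus, hlda, ← hcp]
      exact inv_strictAnti₀ (pow_pos hys_pos p) (pow_lt_pow_left₀ hysc hys_pos.le hp0)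
    have hprod : 0 < (y s ^ (-(p:ℤ)) - lam / α) * Real.exp ((-((p:ℝ) * α)) * s) :=
      mul_pos (sub_pos.mpr hbig) (Real.exp_pos _)
    rw [hkey] at hprod
    linarith
  -- final contradiction at s = T
  have hkeyT := key T (right_mem_Icc.mpr hT0.le) (fun t ht => hnz t ht)
  have hexpT : Real.exp (((p:ℝ) * α) * T) = (lam / α) / (lam / α - u₀) := by
    rw [hT]
    rw [show ((p:ℝ) * α) * ((1 / ((p:ℝ) * α)) * Real.log ((lam / α) / (lam / α - u₀)))
      = Real.log ((lam / α) / (lam / α - u₀)) by field_simp]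
    exact Real.exp_log (by positivity)
  have hexpnT : Real.exp ((-((p:ℝ) * α)) * T) = (lam / α - u₀) / (lam / α) := by
    rw [show (-((p:ℝ) * α)) * T = -(((p:ℝ) * α) * T) by ring, Real.exp_neg, hexpT,
      inv_div]
  rw [hexpnT] at hkeyT
  have hA : lam / α ≠ 0 := hlda0.ne'
  have hB : lam / α - u₀ ≠ 0 := hsub.ne'
  have hBB : lam - α * u₀ ≠ 0 := by
    have h2 : α * (lam / α - u₀) = lam - α * u₀ := by field_simp
    have h3 := mul_pos hα0 hsub
    rw [h2] at h3
    exact h3.ne'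
  have hmul : ((lam / α - u₀) / (lam / α)) * ((lam / α) / (lam / α - u₀)) = 1 := by
    field_simp
  have h5 : y T ^ (-(p:ℤ)) - lam / α = (u₀ - lam / α) * ((lam / α) / (lam / α - u₀)) := by
    calc y T ^ (-(p:ℤ)) - lam / α
        = ((y T ^ (-(p:ℤ)) - lam / α) * ((lam / α - u₀) / (lam / α)))
            * ((lam / α) / (lam / α - u₀)) := by rw [mul_assoc, hmul, mul_one]
      _ = (u₀ - lam / α) * ((lam / α) / (lam / α - u₀)) := by rw [hkeyT]
  have h6 : (u₀ - lam / α) * ((lam / α) / (lam / α - u₀)) = -(lam / α) := by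
    rw [show u₀ - lam / α = -(lam / α - u₀) by ring]
    field_simp
  have huT : y T ^ (-(p:ℤ)) = 0 := by rw [h6] at h5; linarith
  exact zpow_ne_zero (-(p:ℤ)) (hnz T (right_mem_Icc.mpr hT0.le)) huT
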